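/- In the Majorana setting, suppose Γ is a skew conjugation commuting with S_adv and suppose S_adv has formal adjoint S_ret (⟨u, S_adv v⟩ = ⟨S_ret u, v⟩), and suppose S̃_F satisfies ⟨Γf, S̃_F h⟩ = −⟨Γh, S̃_F f⟩. Define W(f⊗h) = −i⟨Γf, (S̃_F − S_adv) h⟩. Then W(f⊗h) + W(h⊗f) = i⟨Γf, (S_adv − S_ret) h⟩, i.e. W satisfies the Majorana anticommutation relation. -/
import Mathlib


/-- Majorana anticommutation relation (final Corollary of Section 5): with
`W(f⊗h) = −i⟨Γf, (S̃_F − S_adv)h⟩` one has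
`W(f⊗h) + W(h⊗f) = i⟨Γf, (S_adv − S_ret)h⟩`. -/
theorem stmt14 {V : Type*} [AddCommGroup V] [Module ℂ V]
    (B : V → V →ₗ[ℂ] ℂ)
    (hherm : ∀ u v, B u v = starRingEnd ℂ (B v u))
    (Γ : V → V)
    (hΓinv : ∀ f, Γ (Γ f) = f)
    (hskewΓ : ∀ f h, B (Γ f) (Γ h) = - B h f)
    (Sadv Sret SFt : V →ₗ[ℂ] V)
    (hcomm : ∀ f, Γ (Sadv f) = Sadv (Γ f))
    (hadj : ∀ u v, B u (Sadv v) = B (Sret u) v)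
    (hskewSF : ∀ f h, B (Γ f) (SFt h) = - B (Γ h) (SFt f))
    (W : V → V → ℂ)
    (hW : ∀ f h, W f h = (-Complex.I) * B (Γ f) ((SFt - Sadv) h)) :
    ∀ f h, W f h + W h f = Complex.I * B (Γ f) ((Sadv - Sret) h) := by
  intro f h
  have key : B (Γ h) (Sadv f) = - B (Γ f) (Sret h) := by
    have h1 : Sadv f = Γ (Sadv (Γ f)) := by rw [hcomm, hΓinv]
    rw [h1, hskewΓ, hherm (Sadv (Γ f)) h, hadj, ← hherm]
  rw [hW, hW]
  simp only [LinearMap.sub_apply, map_sub]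
  rw [hskewSF h f, key]
  ring
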